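/- Let Φ ∈ S₂(E, E_*). The operator P_Φ = [[P₊, −Φ P₊],[−Φ* P₋, P₋]] on L²(E_*) ⊕ L²(E) satisfies P_Φ² = P_Φ, restricts to the identity on the scattering subspace K_Φ, and annihilates W ⊕ W_*; hence P_Φ is the orthogonal projection of ℋ onto K_Φ. -/

import Mathlib

/- STATEMENT 7: Let Φ ∈ S₂(E,E_*).  The operator P_Φ = [[P₊, −ΦP₊],[−Φ*P₋, P₋]] on
L²(E_*) ⊕ L²(E) satisfies P_Φ² = P_Φ, restricts to the identity on the scattering subspace
K_Φ, annihilates W ⊕ W_*; hence P_Φ is the orthogonal projection of ℋ onto K_Φ.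

P₊ (resp. P₋ = I − P₊) is the orthogonal projection onto H² (resp. L²⊖H²) in each of the
two component spaces; W_* = {(h, Φ*h) : h ∈ L²⊖H²(E_*)}, W = {(Φh, h) : h ∈ H²(E)};
K_Φ = {(f,g) ∈ ℋ : f ∈ H²(E_*), g ∈ L²⊖H²(E)}; ℋ = range S, with operator-range inner
product `ip`; multiplication by Φ maps H²(E) into H²(E_*). -/

open scoped ComplexInnerProductSpace

noncomputable def c1 {A B : Type*} [NormedAddCommGroup A] [NormedAddCommGroup B]
    (x : WithLp 2 (A × B)) : A := (WithLp.equiv 2 (A × B) x).1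

noncomputable def c2 {A B : Type*} [NormedAddCommGroup A] [NormedAddCommGroup B]
    (x : WithLp 2 (A × B)) : B := (WithLp.equiv 2 (A × B) x).2

noncomputable def pr {A B : Type*} [NormedAddCommGroup A] [NormedAddCommGroup B]
    (f : A) (g : B) : WithLp 2 (A × B) := (WithLp.equiv 2 (A × B)).symm (f, g)


set_option linter.unusedSectionVars false
section Aux
variable {A B : Type*} [NormedAddCommGroup A] [InnerProductSpace ℂ A]
  [NormedAddCommGroup B] [InnerProductSpace ℂ B]

theorem pr_c1_c2 (x : WithLp 2 (A × B)) : pr (c1 x) (c2 x) = x := rfl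
theorem c1_pr (a : A) (b : B) : c1 (pr a b) = a := rfl
theorem c2_pr (a : A) (b : B) : c2 (pr a b) = b := rfl
theorem pr_sub (a a' : A) (b b' : B) : pr a b - pr a' b' = pr (a - a') (b - b') := rfl
theorem pr_zero : (pr (0 : A) (0 : B)) = 0 := rfl
theorem inner_pr (a a' : A) (b b' : B) :
    ⟪pr a b, pr a' b'⟫ = ⟪a, a'⟫ + ⟪b, b'⟫ := by
  rw [WithLp.prod_inner_apply]; rfl

theorem sa_inner {A : Type*} [NormedAddCommGroup A] [InnerProductSpace ℂ A] [CompleteSpace A]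
    (T : A →L[ℂ] A) (h : IsSelfAdjoint T) (x y : A) : ⟪T x, y⟫ = ⟪x, T y⟫ := by
  nth_rewrite 1 [← h.adjoint_eq]
  exact ContinuousLinearMap.adjoint_inner_left T y x

end Aux

theorem stmt_7 {L2E L2Es : Type*}
    [NormedAddCommGroup L2E] [InnerProductSpace ℂ L2E] [CompleteSpace L2E]
    [NormedAddCommGroup L2Es] [InnerProductSpace ℂ L2Es] [CompleteSpace L2Es]
    (MΦ : L2E →L[ℂ] L2Es) (hMΦ : ‖MΦ‖ ≤ 1)
    -- S = [[I,Φ],[Φ*,I]]^{1/2}: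
    (S : WithLp 2 (L2Es × L2E) →L[ℂ] WithLp 2 (L2Es × L2E))
    (hS : IsSelfAdjoint S) (hSpos : ∀ x, 0 ≤ (⟪S x, x⟫).re)
    (hS2 : ∀ (f : L2Es) (g : L2E),
      S (S (pr f g)) = pr (f + MΦ g) (ContinuousLinearMap.adjoint MΦ f + g))
    -- the projections P₊, P₋ = 1 − P₊ onto H² and L²⊖H² in both component spaces:
    (PpE : L2E →L[ℂ] L2E) (hPpE : IsSelfAdjoint PpE) (hPpE2 : PpE ∘L PpE = PpE)
    (PpEs : L2Es →L[ℂ] L2Es) (hPpEs : IsSelfAdjoint PpEs) (hPpEs2 : PpEs ∘L PpEs = PpEs)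
    -- multiplication by Φ maps H²(E) into H²(E_*):
    (hMΦH2 : ∀ h : L2E, PpEs (MΦ (PpE h)) = MΦ (PpE h))
    -- P_Φ = [[P₊, −ΦP₊],[−Φ*P₋, P₋]]:
    (PΦ : WithLp 2 (L2Es × L2E) →L[ℂ] WithLp 2 (L2Es × L2E))
    (hPΦ : ∀ (f : L2Es) (g : L2E),
      PΦ (pr f g) = pr (PpEs f - MΦ (PpE g))
        ((g - PpE g) - ContinuousLinearMap.adjoint MΦ (f - PpEs f)))
    -- the subspaces W_*, W, K_Φ:
    (Wstar Wsp KΦ : Set (WithLp 2 (L2Es × L2E)))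
    (hWstar : Wstar = {p | ∃ h : L2Es, PpEs h = 0 ∧
      p = pr h (ContinuousLinearMap.adjoint MΦ h)})
    (hWsp : Wsp = {p | ∃ h : L2E, PpE h = h ∧ p = pr (MΦ h) h})
    (hKΦ : KΦ = {p | p ∈ Set.range S ∧ PpEs (c1 p) = c1 p ∧ PpE (c2 p) = 0})
    -- the operator-range inner product of ℋ:
    (ip : WithLp 2 (L2Es × L2E) → WithLp 2 (L2Es × L2E) → ℂ)
    (hip : ∀ x y, x ∈ (LinearMap.ker S.toLinearMap)ᗮ → ip (S x) (S y) = ⟪x, y⟫) :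
    PΦ ∘L PΦ = PΦ ∧
      (∀ p ∈ KΦ, PΦ p = p) ∧
      (∀ p ∈ Wstar ∪ Wsp, PΦ p = 0) ∧
      -- hence P_Φ is the ℋ-orthogonal projection of ℋ onto K_Φ:
      ∀ p ∈ Set.range S, PΦ p ∈ KΦ ∧ ∀ q ∈ KΦ, ip (p - PΦ p) q = 0 := by
  
  classical
  set Q := ContinuousLinearMap.adjoint MΦ with hQdef
  have hPpE2' : ∀ g : L2E, PpE (PpE g) = PpE g := fun g =>
    congrFun (congrArg DFunLike.coe hPpE2) g
  have hPpEs2' : ∀ f : L2Es, PpEs (PpEs f) = PpEs f := fun f =>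
    congrFun (congrArg DFunLike.coe hPpEs2) f
  -- key : P₊ Φ* (1 - P₊) = 0
  have hkey : ∀ f : L2Es, PpE (Q (f - PpEs f)) = 0 := by
    intro f
    have hz : ∀ w : L2E, ⟪PpE (Q (f - PpEs f)), w⟫ = 0 := by
      intro w
      rw [sa_inner PpE hPpE, hQdef, ContinuousLinearMap.adjoint_inner_left,
        ← hMΦH2 w, ← sa_inner PpEs hPpEs]
      have : PpEs (f - PpEs f) = 0 := by rw [map_sub, hPpEs2', sub_self]
      rw [this, inner_zero_left]
    have := hz (PpE (Q (f - PpEs f)))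
    exact inner_self_eq_zero.mp this
  have hA : ∀ (f : L2Es) (g : L2E),
      PpEs (PpEs f - MΦ (PpE g)) = PpEs f - MΦ (PpE g) := by
    intro f g
    rw [map_sub, hPpEs2', hMΦH2]
  have hB : ∀ (f : L2Es) (g : L2E),
      PpE ((g - PpE g) - Q (f - PpEs f)) = 0 := by
    intro f g
    rw [map_sub, map_sub, hPpE2', sub_self, hkey, zero_sub, neg_zero]
  have hidem : ∀ x, PΦ (PΦ x) = PΦ x := by
    intro x
    rw [← pr_c1_c2 x, hPΦ, hPΦ]
    rw [hA, hB]
    simp only [map_zero, sub_zero, sub_self]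
  refine ⟨?_, ?_, ?_, ?_⟩
  · ext x
    exact hidem x
  · intro p hp
    rw [hKΦ] at hp
    obtain ⟨-, h1, h2⟩ := hp
    rw [← pr_c1_c2 p, hPΦ, h1, h2]
    simp only [map_zero, sub_zero, sub_self]
  · intro p hp
    rcases hp with hp | hp
    · rw [hWstar] at hp
      obtain ⟨h, hh, rfl⟩ := hp
      have hk : PpE (Q h) = 0 := by
        have := hkey h; rwa [hh, sub_zero] at this
      rw [hPΦ, hh, hk]
      simp only [map_zero, sub_zero, sub_self]
      exact pr_zero
    · rw [hWsp] at hp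
      obtain ⟨h, hh, rfl⟩ := hp
      have hMh : PpEs (MΦ h) = MΦ h := by rw [← hh, hMΦH2]
      rw [hPΦ, hMh, hh]
      simp only [map_zero, sub_zero, sub_self]
      exact pr_zero
  · rintro p ⟨x, rfl⟩
    set f := c1 (S x) with hf
    set g := c2 (S x) with hg
    set u : WithLp 2 (L2Es × L2E) := pr (f - PpEs f) (PpE g) with hu
    have hdiff : S x - PΦ (S x) = S (S u) := by
      rw [hu, hS2]
      conv_lhs => rw [← pr_c1_c2 (S x), hPΦ]
      rw [pr_sub]
      congr 1
      · rw [← hf]; abel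
      · rw [← hf, ← hg]; abel
    constructor
    · rw [hKΦ]
      refine ⟨⟨x - S u, ?_⟩, ?_, ?_⟩
      · rw [map_sub, ← hdiff]; abel
      · conv_lhs => rw [← pr_c1_c2 (S x), hPΦ, c1_pr]
        conv_rhs => rw [← pr_c1_c2 (S x), hPΦ, c1_pr]
        exact hA _ _
      · conv_lhs => rw [← pr_c1_c2 (S x), hPΦ, c2_pr]
        exact hB _ _
    · intro q hq
      rw [hKΦ] at hq
      obtain ⟨⟨y, rfl⟩, hq1, hq2⟩ := hq
      rw [hdiff]
      have hSu : S u ∈ (LinearMap.ker S.toLinearMap)ᗮ := by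
        intro k hk
        have hk' : S k = 0 := hk
        rw [← sa_inner S hS, hk', inner_zero_left]
      rw [hip (S u) y hSu]
      rw [sa_inner S hS, hu, ← pr_c1_c2 (S y), inner_pr]
      have h1 : ⟪f - PpEs f, c1 (S y)⟫ = 0 := by
        rw [← hq1, ← sa_inner PpEs hPpEs, map_sub, hPpEs2', sub_self, inner_zero_left]
      have h2 : ⟪PpE g, c2 (S y)⟫ = 0 := by
        rw [sa_inner PpE hPpE, hq2, inner_zero_right]
      rw [h1, h2, add_zero]
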